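/- arXiv:2509.20221 — 2 statements merged into one kernel-verified Lean document; each statement's English description precedes it below -/
import Mathlib

section
/- Let P̃₁, P̃₂ be non-deterministic random probability measures on X with the same mean measure P₀, satisfying Cov(P̃₁(A), P̃₂(A)) = η · P₀(A)(1 − P₀(A)) for all measurable A and some η ∈ [−1,1], and Var(P̃ᵢ(A)) = λᵢ · P₀(A)(1 − P₀(A)) for all measurable A with λᵢ ∈ (0,1], i = 1,2. Then for every injective kernel k and every measurable set A such that P̃₁(A) and P̃₂(A) are not deterministic, Corr_k(P̃₁,P̃₂) = Corr(P̃₁(A), P̃₂(A)) = η / √(λ₁ λ₂). In particular, the kernel correlation does not depend on the choice of the injective kernel k. -/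
open MeasureTheory ProbabilityTheory Filter
open scoped RealInnerProductSpace ENNReal NNReal

noncomputable section

/-- A positive-definite function `k`. -/
def IsPosDef {X : Type*} (k : X → X → ℝ) : Prop :=
  ∀ (n : ℕ) (x : Fin n → X) (c : Fin n → ℝ),
    0 ≤ ∑ i : Fin n, ∑ j : Fin n, c i * c j * k (x i) (x j)

/-- A bounded, measurable, symmetric, positive-definite kernel. -/
structure IsKernel {X : Type*} [MeasurableSpace X] (k : X → X → ℝ) : Prop where
  measurable : Measurable (Function.uncurry k)
  bounded : ∃ C : ℝ, ∀ x y, |k x y| ≤ C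
  symm : ∀ x y, k x y = k y x
  posDef : IsPosDef k

/-- A realization of the reproducing kernel Hilbert space of `k`: a Hilbert space together with
a feature map reproducing `k` whose feature vectors span a dense subspace. -/
structure FeatureMap {X : Type*} [MeasurableSpace X] (k : X → X → ℝ)
    (H : Type*) [NormedAddCommGroup H] [InnerProductSpace ℝ H] : Type _ where
  toFun : X → H
  stronglyMeasurable : StronglyMeasurable toFun
  repro : ∀ x y, ⟪toFun x, toFun y⟫ = k x y
  dense_span : Dense (Submodule.span ℝ (Set.range toFun) : Set H)

/-- Kernel mean embedding of a measure, as a Bochner integral of the feature map. -/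
def meanEmb {X : Type*} [MeasurableSpace X] {k : X → X → ℝ} {H : Type*}
    [NormedAddCommGroup H] [InnerProductSpace ℝ H] [CompleteSpace H]
    (F : FeatureMap k H) (μ : Measure X) : H :=
  ∫ x, F.toFun x ∂μ

/-- Kernel covariance of two random probability measures,
`Cov_k(P₁,P₂) = E[⟪μ_k(P₁) - E[μ_k(P₁)], μ_k(P₂) - E[μ_k(P₂)]⟫]`. -/
def kerCov {X : Type*} [MeasurableSpace X] {k : X → X → ℝ} {H : Type*}
    [NormedAddCommGroup H] [InnerProductSpace ℝ H] [CompleteSpace H]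
    {Ω : Type*} [MeasurableSpace Ω]
    (F : FeatureMap k H) (Pr : Measure Ω) (P₁ P₂ : Ω → Measure X) : ℝ :=
  ∫ ω, ⟪meanEmb F (P₁ ω) - ∫ ω', meanEmb F (P₁ ω') ∂Pr,
        meanEmb F (P₂ ω) - ∫ ω', meanEmb F (P₂ ω') ∂Pr⟫ ∂Pr

/-- Kernel variance of a random probability measure. -/
def kerVar {X : Type*} [MeasurableSpace X] {k : X → X → ℝ} {H : Type*}
    [NormedAddCommGroup H] [InnerProductSpace ℝ H] [CompleteSpace H]
    {Ω : Type*} [MeasurableSpace Ω]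
    (F : FeatureMap k H) (Pr : Measure Ω) (P : Ω → Measure X) : ℝ :=
  kerCov F Pr P P

/-- Kernel correlation of two random probability measures. -/
def kerCorr {X : Type*} [MeasurableSpace X] {k : X → X → ℝ} {H : Type*}
    [NormedAddCommGroup H] [InnerProductSpace ℝ H] [CompleteSpace H]
    {Ω : Type*} [MeasurableSpace Ω]
    (F : FeatureMap k H) (Pr : Measure Ω) (P₁ P₂ : Ω → Measure X) : ℝ :=
  kerCov F Pr P₁ P₂ / (Real.sqrt (kerVar F Pr P₁) * Real.sqrt (kerVar F Pr P₂))

/-- Covariance of two real random variables. -/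
def rCov {Ω : Type*} [MeasurableSpace Ω] (Pr : Measure Ω) (U V : Ω → ℝ) : ℝ :=
  ∫ ω, (U ω - ∫ ω', U ω' ∂Pr) * (V ω - ∫ ω', V ω' ∂Pr) ∂Pr

/-- Variance of a real random variable. -/
def rVar {Ω : Type*} [MeasurableSpace Ω] (Pr : Measure Ω) (U : Ω → ℝ) : ℝ :=
  rCov Pr U U

/-- Pearson correlation of two real random variables. -/
def rCorr {Ω : Type*} [MeasurableSpace Ω] (Pr : Measure Ω) (U V : Ω → ℝ) : ℝ :=
  rCov Pr U V / (Real.sqrt (rVar Pr U) * Real.sqrt (rVar Pr V))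

end

noncomputable section

/-- A kernel is injective if its feature map `x ↦ k(x,·)` is injective. -/
def IsInjectiveKernel {Z : Type*} (k : Z → Z → ℝ) : Prop :=
  Function.Injective fun x => (fun y => k x y)

section Aux

variable {X : Type*} [MeasurableSpace X] {Ω : Type*} [MeasurableSpace Ω]

lemma integrable_bdd {μ : Measure Ω} [IsFiniteMeasure μ] {E : Type*} [NormedAddCommGroup E]
    {f : Ω → E} (hm : AEStronglyMeasurable f μ) {C : ℝ} (hC : ∀ ω, ‖f ω‖ ≤ C) :
    Integrable f μ :=
  ⟨hm, HasFiniteIntegral.of_bounded (C := C) (ae_of_all _ hC)⟩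

lemma rCov_eq {Pr : Measure Ω} [IsProbabilityMeasure Pr] {U V : Ω → ℝ}
    (hU : Measurable U) (hV : Measurable V) (hbU : ∀ ω, |U ω| ≤ 1) (hbV : ∀ ω, |V ω| ≤ 1) :
    rCov Pr U V = ∫ ω, U ω * V ω ∂Pr - (∫ ω, U ω ∂Pr) * (∫ ω, V ω ∂Pr) := by
  have iU : Integrable U Pr := integrable_bdd hU.aestronglyMeasurable (by simpa using hbU)
  have iV : Integrable V Pr := integrable_bdd hV.aestronglyMeasurable (by simpa using hbV)
  have iUV : Integrable (fun ω => U ω * V ω) Pr := by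
    refine integrable_bdd (hU.mul hV).aestronglyMeasurable (C := 1) fun ω => ?_
    rw [Real.norm_eq_abs, abs_mul]
    exact mul_le_one₀ (hbU ω) (abs_nonneg _) (hbV ω)
  set a := ∫ ω, U ω ∂Pr
  set b := ∫ ω, V ω ∂Pr
  have h : (fun ω => (U ω - a) * (V ω - b))
      = fun ω => U ω * V ω - a * V ω - b * U ω + a * b := by funext ω; ring
  have i2 : Integrable (fun ω => U ω * V ω - a * V ω) Pr := iUV.sub (iV.const_mul a)
  have i1 : Integrable (fun ω => U ω * V ω - a * V ω - b * U ω) Pr := i2.sub (iU.const_mul b)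
  rw [rCov, h, integral_add i1 (integrable_const _), integral_sub i2 (iU.const_mul b),
    integral_sub iUV (iV.const_mul a), integral_const_mul, integral_const_mul, integral_const]
  simp [a, b]
  ring

lemma prob_bind {Pr : Measure Ω} [IsProbabilityMeasure Pr] {P : Ω → Measure X}
    (hPm : Measurable P) (hP : ∀ ω, IsProbabilityMeasure (P ω)) :
    IsProbabilityMeasure (Pr.bind P) := by
  constructor
  rw [Measure.bind_apply MeasurableSet.univ hPm.aemeasurable]
  simp [measure_univ]

lemma integral_bind'' {E : Type*} [NormedAddCommGroup E] [NormedSpace ℝ E]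
    {Pr : Measure Ω} [IsProbabilityMeasure Pr] {P : Ω → Measure X}
    (hPm : Measurable P) (hP : ∀ ω, IsProbabilityMeasure (P ω))
    {f : X → E} (hf : StronglyMeasurable f) {C : ℝ} (hC : ∀ x, ‖f x‖ ≤ C) :
    ∫ x, f x ∂(Pr.bind P) = ∫ ω, ∫ x, f x ∂(P ω) ∂Pr := by
  let κ : Kernel Ω X := ⟨P, hPm⟩
  haveI : IsMarkovKernel κ := ⟨hP⟩
  have hbind : Pr.bind P = (Pr ⊗ₘ κ).map Prod.snd := by
    ext s hs
    rw [Measure.bind_apply hs hPm.aemeasurable, Measure.map_apply measurable_snd hs,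
      Measure.compProd_apply (measurable_snd hs)]
    rfl
  haveI : IsProbabilityMeasure (Pr ⊗ₘ κ) := by
    constructor
    simpa using Measure.compProd_apply_univ (μ := Pr) (κ := κ)
  have hint : Integrable (fun z : Ω × X => f z.2) (Pr ⊗ₘ κ) :=
    integrable_bdd (hf.comp_measurable measurable_snd).aestronglyMeasurable fun z => hC z.2
  rw [hbind, integral_map measurable_snd.aemeasurable hf.aestronglyMeasurable,
    Measure.integral_compProd hint]
  rfl

lemma integral_bind_toReal {Pr : Measure Ω} [IsProbabilityMeasure Pr] {P : Ω → Measure X}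
    (hPm : Measurable P) (hP : ∀ ω, IsProbabilityMeasure (P ω))
    {A : Set X} (hA : MeasurableSet A) :
    ∫ ω, (P ω A).toReal ∂Pr = ((Pr.bind P) A).toReal := by
  have hm : AEMeasurable (fun ω => P ω A) Pr := ((Measure.measurable_coe hA).comp hPm).aemeasurable
  rw [integral_toReal hm (ae_of_all _ fun ω => lt_of_le_of_lt prob_le_one ENNReal.one_lt_top),
    Measure.bind_apply hA hPm.aemeasurable]

end Aux
section Aux2

variable {X : Type*} [MeasurableSpace X] {Ω : Type*} [MeasurableSpace Ω]
variable {k : X → X → ℝ} {H : Type*} [NormedAddCommGroup H] [InnerProductSpace ℝ H]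
  [CompleteSpace H]

lemma kmeas (hk : IsKernel k) : Measurable (fun z : X × X => k z.1 z.2) := hk.measurable

lemma norm_F_le (hk : IsKernel k) (F : FeatureMap k H) {C : ℝ} (hC : ∀ x y, |k x y| ≤ C) (x : X) :
    ‖F.toFun x‖ ≤ Real.sqrt C := by
  have h1 : ‖F.toFun x‖ ^ 2 = k x x := by rw [← real_inner_self_eq_norm_sq, F.repro]
  have h2 : k x x ≤ C := (abs_le.mp (hC x x)).2
  have := Real.sqrt_le_sqrt (h1 ▸ h2 : ‖F.toFun x‖ ^ 2 ≤ C)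
  rwa [Real.sqrt_sq (norm_nonneg _)] at this

lemma integrable_F (hk : IsKernel k) (F : FeatureMap k H) (μ : Measure X)
    [IsFiniteMeasure μ] : Integrable F.toFun μ := by
  obtain ⟨C, hC⟩ := hk.bounded
  exact integrable_bdd F.stronglyMeasurable.aestronglyMeasurable (norm_F_le hk F hC)

lemma norm_meanEmb_le (hk : IsKernel k) (F : FeatureMap k H) {C : ℝ} (hC : ∀ x y, |k x y| ≤ C)
    (μ : Measure X) [IsProbabilityMeasure μ] : ‖meanEmb F μ‖ ≤ Real.sqrt C := by
  have := norm_integral_le_of_norm_le_const (μ := μ) (f := F.toFun) (C := Real.sqrt C)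
    (ae_of_all _ (norm_F_le hk F hC))
  simpa [meanEmb, measure_univ] using this

lemma integrable_k_prod (hk : IsKernel k) (μ : Measure (X × X)) [IsFiniteMeasure μ] :
    Integrable (fun z : X × X => k z.1 z.2) μ := by
  obtain ⟨C, hC⟩ := hk.bounded
  exact integrable_bdd (kmeas hk).stronglyMeasurable.aestronglyMeasurable
    (fun z => by rw [Real.norm_eq_abs]; exact hC z.1 z.2)

lemma inner_meanEmb (hk : IsKernel k) (F : FeatureMap k H) (μ ν : Measure X)
    [IsProbabilityMeasure μ] [IsProbabilityMeasure ν] :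
    ⟪meanEmb F μ, meanEmb F ν⟫ = ∫ z, k z.1 z.2 ∂(μ.prod ν) := by
  have hFμ : Integrable F.toFun μ := integrable_F hk F μ
  have hFν : Integrable F.toFun ν := integrable_F hk F ν
  have e : ⟪meanEmb F ν, meanEmb F μ⟫ = ∫ x, ⟪meanEmb F ν, F.toFun x⟫ ∂μ :=
    (integral_inner hFμ _).symm
  have h1 : ⟪meanEmb F μ, meanEmb F ν⟫ = ∫ x, ⟪F.toFun x, meanEmb F ν⟫ ∂μ := by
    rw [real_inner_comm, e]
    simp_rw [real_inner_comm]
  rw [h1]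
  have h2 : ∀ x, ⟪F.toFun x, meanEmb F ν⟫ = ∫ y, k x y ∂ν := fun x =>
    ((integral_inner hFν (F.toFun x)).symm).trans
      (integral_congr_ae (Filter.Eventually.of_forall fun y => F.repro x y))
  simp_rw [h2]
  exact (integral_prod _ (integrable_k_prod hk _)).symm

lemma sm_meanEmb (F : FeatureMap k H) {P : Ω → Measure X} (hPm : Measurable P)
    (hP : ∀ ω, IsProbabilityMeasure (P ω)) :
    StronglyMeasurable (fun ω => meanEmb F (P ω)) := by
  let κ : Kernel Ω X := ⟨P, hPm⟩
  haveI : IsMarkovKernel κ := ⟨hP⟩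
  have : StronglyMeasurable (Function.uncurry fun (_ : Ω) (x : X) => F.toFun x) :=
    F.stronglyMeasurable.comp_measurable measurable_snd
  exact this.integral_kernel_prod_right (κ := κ)

end Aux2
section Aux3

variable {X : Type*} [MeasurableSpace X] {Ω : Type*} [MeasurableSpace Ω]

lemma bind_prod_integral
    {Pr : Measure Ω} [IsProbabilityMeasure Pr] {P Q : Ω → Measure X}
    (hPm : Measurable P) (hQm : Measurable Q)
    (hP : ∀ ω, IsProbabilityMeasure (P ω)) (hQ : ∀ ω, IsProbabilityMeasure (Q ω))
    {P₀ : Measure X} (hbP : Pr.bind P = P₀) (hbQ : Pr.bind Q = P₀)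
    {θ : ℝ} (hθ' : θ ≤ 1)
    (hc : ∀ A : Set X, MeasurableSet A →
      rCov Pr (fun ω => (P ω A).toReal) (fun ω => (Q ω A).toReal)
        = θ * ((P₀ A).toReal * (1 - (P₀ A).toReal)))
    {g : X × X → ℝ} (hg : Measurable g) {C : ℝ} (hgb : ∀ z, |g z| ≤ C)
    (hgs : ∀ x y, g (x, y) = g (y, x)) :
    ∫ z, g z ∂(Pr.bind (fun ω => (P ω).prod (Q ω)))
      = θ * ∫ x, g (x, x) ∂P₀ + (1 - θ) * ∫ z, g z ∂(P₀.prod P₀) := by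
  haveI hP₀ : IsProbabilityMeasure P₀ := hbP ▸ prob_bind hPm hP
  -- measurability of the product family
  let κP : Kernel Ω X := ⟨P, hPm⟩
  haveI : IsMarkovKernel κP := ⟨hP⟩
  let κQ : Kernel Ω X := ⟨Q, hQm⟩
  haveI : IsMarkovKernel κQ := ⟨hQ⟩
  have hprodm : Measurable (fun ω => (P ω).prod (Q ω)) := by
    have h1 := (κP ×ₖ κQ).measurable
    have h2 : ⇑(κP ×ₖ κQ) = fun ω => (P ω).prod (Q ω) :=
      funext fun ω => Kernel.prod_apply κP κQ ω
    rwa [h2] at h1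
  haveI hprodp : ∀ ω, IsProbabilityMeasure ((P ω).prod (Q ω)) := fun ω => by
    haveI := hP ω; haveI := hQ ω; infer_instance
  set M₀ : Measure (X × X) := Pr.bind (fun ω => (P ω).prod (Q ω)) with hM₀
  haveI : IsProbabilityMeasure M₀ := prob_bind hprodm hprodp
  -- measurable real-valued coordinates
  have hUm : ∀ {A : Set X}, MeasurableSet A → Measurable (fun ω => (P ω A).toReal) :=
    fun hA => ((Measure.measurable_coe hA).comp hPm).ennreal_toReal
  have hVm : ∀ {A : Set X}, MeasurableSet A → Measurable (fun ω => (Q ω A).toReal) :=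
    fun hA => ((Measure.measurable_coe hA).comp hQm).ennreal_toReal
  have hUb : ∀ (R : Ω → Measure X), (∀ ω, IsProbabilityMeasure (R ω)) → ∀ (A : Set X) (ω : Ω),
      |(R ω A).toReal| ≤ 1 := by
    intro R hR A ω
    rw [abs_of_nonneg ENNReal.toReal_nonneg]
    haveI := hR ω
    have := ENNReal.toReal_mono (by simp) (prob_le_one (μ := R ω) (s := A))
    simpa using this
  -- mean identities
  have hmeanP : ∀ {A : Set X}, MeasurableSet A →
      ∫ ω, (P ω A).toReal ∂Pr = (P₀ A).toReal := fun hA => by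
    rw [integral_bind_toReal hPm hP hA, hbP]
  have hmeanQ : ∀ {A : Set X}, MeasurableSet A →
      ∫ ω, (Q ω A).toReal ∂Pr = (P₀ A).toReal := fun hA => by
    rw [integral_bind_toReal hQm hQ hA, hbQ]
  -- the second-moment function
  set c : Set X → Set X → ℝ :=
    fun A B => ∫ ω, (P ω A).toReal * (Q ω B).toReal ∂Pr with hcdef
  have hcB : ∀ {A B : Set X}, MeasurableSet A → MeasurableSet B →
      c A B = rCov Pr (fun ω => (P ω A).toReal) (fun ω => (Q ω B).toReal)
        + (P₀ A).toReal * (P₀ B).toReal := by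
    intro A B hA hB
    rw [rCov_eq (hUm hA) (hVm hB) (hUb P hP A) (hUb Q hQ B), hmeanP hA, hmeanQ hB]
    ring
  have hdiagc : ∀ {A : Set X}, MeasurableSet A →
      c A A = θ * ((P₀ A).toReal * (1 - (P₀ A).toReal)) + (P₀ A).toReal * (P₀ A).toReal := by
    intro A hA
    rw [hcB hA hA, hc A hA]
  -- additivity in each argument
  have haddP : ∀ (R : Ω → Measure X), (∀ ω, IsProbabilityMeasure (R ω)) →
      ∀ {U V : Set X}, MeasurableSet V → Disjoint U V → ∀ ω,
      (R ω (U ∪ V)).toReal = (R ω U).toReal + (R ω V).toReal := by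
    intro R hR U V hV hUV ω
    haveI := hR ω
    rw [measure_union hUV hV, ENNReal.toReal_add (measure_ne_top _ _) (measure_ne_top _ _)]
  have hadd₀ : ∀ {U V : Set X}, MeasurableSet V → Disjoint U V →
      (P₀ (U ∪ V)).toReal = (P₀ U).toReal + (P₀ V).toReal := by
    intro U V hV hUV
    rw [measure_union hUV hV, ENNReal.toReal_add (measure_ne_top _ _) (measure_ne_top _ _)]
  have hintc : ∀ {A B : Set X}, MeasurableSet A → MeasurableSet B →
      Integrable (fun ω => (P ω A).toReal * (Q ω B).toReal) Pr := by
    intro A B hA hB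
    refine integrable_bdd ((hUm hA).mul (hVm hB)).aestronglyMeasurable (C := 1) fun ω => ?_
    rw [Real.norm_eq_abs, abs_mul]
    exact mul_le_one₀ (hUb P hP A ω) (abs_nonneg _) (hUb Q hQ B ω)
  have haddL : ∀ {U V W : Set X}, MeasurableSet U → MeasurableSet V → MeasurableSet W →
      Disjoint U V → c (U ∪ V) W = c U W + c V W := by
    intro U V W hU hV hW hUV
    rw [hcdef]
    simp only
    rw [← integral_add (hintc hU hW) (hintc hV hW)]
    refine integral_congr_ae (Filter.Eventually.of_forall fun ω => ?_)
    dsimp only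
    rw [haddP P hP hV hUV ω]; ring
  have haddR : ∀ {U V W : Set X}, MeasurableSet U → MeasurableSet V → MeasurableSet W →
      Disjoint V W → c U (V ∪ W) = c U V + c U W := by
    intro U V W hU hV hW hVW
    rw [hcdef]
    simp only
    rw [← integral_add (hintc hU hV) (hintc hU hW)]
    refine integral_congr_ae (Filter.Eventually.of_forall fun ω => ?_)
    dsimp only
    rw [haddP Q hQ hW hVW ω]; ring
  -- symmetrized covariance on disjoint sets
  have hdisj : ∀ {U V : Set X}, MeasurableSet U → MeasurableSet V → Disjoint U V →
      c U V + c V U = 2 * (1 - θ) * ((P₀ U).toReal * (P₀ V).toReal) := by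
    intro U V hU hV hUV
    have h1 : c (U ∪ V) (U ∪ V) = c U U + c U V + c V U + c V V := by
      rw [haddL hU hV (hU.union hV) hUV, haddR hU hU hV hUV, haddR hV hU hV hUV]
      ring
    have h2 := hdiagc (hU.union hV)
    have h3 := hdiagc hU
    have h4 := hdiagc hV
    have h5 := hadd₀ hV hUV
    rw [h1, h3, h4, h5] at h2
    linear_combination h2
  -- symmetrized covariance on general sets
  have hsym : ∀ {A B : Set X}, MeasurableSet A → MeasurableSet B →
      c A B + c B A = 2 * θ * (P₀ (A ∩ B)).toReal
        + 2 * (1 - θ) * ((P₀ A).toReal * (P₀ B).toReal) := by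
    intro A B hA hB
    have hA' : MeasurableSet (A \ B) := hA.diff hB
    have hB' : MeasurableSet (B \ A) := hB.diff hA
    have hC' : MeasurableSet (A ∩ B) := hA.inter hB
    have dA : A \ B ∪ A ∩ B = A := Set.diff_union_inter A B
    have hBA : B ∩ A = A ∩ B := Set.inter_comm B A
    have dB2 : B \ A ∪ A ∩ B = B := by rw [← hBA]; exact Set.diff_union_inter B A
    have disjA : Disjoint (A \ B) (A ∩ B) :=
      Set.disjoint_sdiff_left.mono_right Set.inter_subset_right
    have disj2 : Disjoint (B \ A) (A ∩ B) :=
      Set.disjoint_sdiff_left.mono_right Set.inter_subset_left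
    have disjAB : Disjoint (A \ B) (B \ A) :=
      Set.disjoint_sdiff_left.mono_right Set.diff_subset
    have e1 : c A B = c (A \ B) (B \ A) + c (A \ B) (A ∩ B)
        + c (A ∩ B) (B \ A) + c (A ∩ B) (A ∩ B) := by
      rw [show c A B = c ((A \ B) ∪ (A ∩ B)) ((B \ A) ∪ (A ∩ B)) by rw [dA, dB2]]
      rw [haddL hA' hC' (hB'.union hC') disjA, haddR hA' hB' hC' disj2,
        haddR hC' hB' hC' disj2]
      ring
    have e2 : c B A = c (B \ A) (A \ B) + c (B \ A) (A ∩ B)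
        + c (A ∩ B) (A \ B) + c (A ∩ B) (A ∩ B) := by
      rw [show c B A = c ((B \ A) ∪ (A ∩ B)) ((A \ B) ∪ (A ∩ B)) by rw [dA, dB2]]
      rw [haddL hB' hC' (hA'.union hC') disj2, haddR hB' hA' hC' disjA,
        haddR hC' hA' hC' disjA]
      ring
    have w1 := hdisj hA' hB' disjAB
    have w2 := hdisj hA' hC' disjA
    have w3 := hdisj hB' hC' disj2
    have w4 := hdiagc hC'
    have haA : (P₀ A).toReal = (P₀ (A \ B)).toReal + (P₀ (A ∩ B)).toReal := by
      conv_lhs => rw [← dA]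
      exact hadd₀ hC' disjA
    have haB : (P₀ B).toReal = (P₀ (B \ A)).toReal + (P₀ (A ∩ B)).toReal := by
      conv_lhs => rw [← dB2]
      exact hadd₀ hC' disj2
    rw [haA, haB]
    linear_combination e1 + e2 + w1 + w2 + w3 + 2 * w4
  -- rectangles for M₀
  have hrect : ∀ {A B : Set X}, MeasurableSet A → MeasurableSet B →
      (M₀ (A ×ˢ B)).toReal = c A B := by
    intro A B hA hB
    rw [hM₀, Measure.bind_apply (hA.prod hB) hprodm.aemeasurable]
    have h1 : ∀ ω, ((P ω).prod (Q ω)) (A ×ˢ B) = P ω A * Q ω B := fun ω => by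
      haveI := hQ ω; exact Measure.prod_prod A B
    simp_rw [h1]
    have hm : AEMeasurable (fun ω => P ω A * Q ω B) Pr :=
      (((Measure.measurable_coe hA).comp hPm).mul
        ((Measure.measurable_coe hB).comp hQm)).aemeasurable
    have h2 : ∫ ω, ((P ω) A * (Q ω) B).toReal ∂Pr = (∫⁻ ω, P ω A * Q ω B ∂Pr).toReal :=
      integral_toReal hm (ae_of_all _ fun ω => by
        haveI := hP ω; haveI := hQ ω
        exact lt_of_le_of_lt (mul_le_mul' prob_le_one prob_le_one) (by simp))
    rw [← h2, hcdef]
    refine (integral_congr_ae (Filter.Eventually.of_forall fun ω => ?_)).symm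
    exact (ENNReal.toReal_mul).symm
  -- the structural measure identity
  have hdg : Measurable (fun x : X => (x, x)) := measurable_id.prodMk measurable_id
  set Dm : Measure (X × X) := P₀.map (fun x => (x, x)) with hDmdef
  set Qm : Measure (X × X) := P₀.prod P₀ with hQmdef
  haveI : IsProbabilityMeasure Dm := Measure.isProbabilityMeasure_map hdg.aemeasurable
  haveI : IsProbabilityMeasure Qm := by rw [hQmdef]; infer_instance
  haveI : IsProbabilityMeasure (M₀.map Prod.swap) :=
    Measure.isProbabilityMeasure_map measurable_swap.aemeasurable
  have key : (M₀ + M₀.map Prod.swap) + ENNReal.ofReal (2 * (-θ)) • Dm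
      = ENNReal.ofReal (2 * θ) • Dm + ENNReal.ofReal (2 * (1 - θ)) • Qm := by
    haveI : IsFiniteMeasure ((M₀ + M₀.map Prod.swap) + ENNReal.ofReal (2 * (-θ)) • Dm) := by
      constructor
      simp only [Measure.add_apply, Measure.smul_apply, smul_eq_mul, measure_univ, mul_one]
      exact ENNReal.add_lt_top.mpr ⟨ENNReal.add_lt_top.mpr ⟨by simp, by simp⟩,
        ENNReal.ofReal_lt_top⟩
    refine ext_of_generate_finite _ generateFrom_prod.symm isPiSystem_prod ?_ ?_
    · rintro s ⟨A, hA, B, hB, rfl⟩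
      have hA' : MeasurableSet A := hA
      have hB' : MeasurableSet B := hB
      have hswap : (M₀.map Prod.swap) (A ×ˢ B) = M₀ (B ×ˢ A) := by
        rw [Measure.map_apply measurable_swap (hA'.prod hB'), Set.preimage_swap_prod]
      have hD : Dm (A ×ˢ B) = P₀ (A ∩ B) := by
        rw [hDmdef, Measure.map_apply hdg (hA'.prod hB'),
          show (fun x : X => (x, x)) ⁻¹' (A ×ˢ B) = A ∩ B from by ext x; simp [Set.mem_prod]]
      have hQQ : Qm (A ×ˢ B) = P₀ A * P₀ B := Measure.prod_prod A B
      simp only [Measure.add_apply, Measure.smul_apply, smul_eq_mul, hswap, hD, hQQ]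
      have hfin1 : M₀ (A ×ˢ B) + M₀ (B ×ˢ A) + ENNReal.ofReal (2 * (-θ)) * P₀ (A ∩ B) ≠ ⊤ :=
        ENNReal.add_ne_top.mpr ⟨ENNReal.add_ne_top.mpr ⟨measure_ne_top _ _, measure_ne_top _ _⟩,
          ENNReal.mul_ne_top ENNReal.ofReal_ne_top (measure_ne_top _ _)⟩
      have hfin2 : ENNReal.ofReal (2 * θ) * P₀ (A ∩ B)
          + ENNReal.ofReal (2 * (1 - θ)) * (P₀ A * P₀ B) ≠ ⊤ :=
        ENNReal.add_ne_top.mpr ⟨ENNReal.mul_ne_top ENNReal.ofReal_ne_top (measure_ne_top _ _),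
          ENNReal.mul_ne_top ENNReal.ofReal_ne_top
            (ENNReal.mul_ne_top (measure_ne_top _ _) (measure_ne_top _ _))⟩
      refine (ENNReal.toReal_eq_toReal_iff' hfin1 hfin2).mp ?_
      rw [ENNReal.toReal_add (ENNReal.add_ne_top.mpr ⟨measure_ne_top _ _, measure_ne_top _ _⟩)
          (ENNReal.mul_ne_top ENNReal.ofReal_ne_top (measure_ne_top _ _)),
        ENNReal.toReal_add (measure_ne_top _ _) (measure_ne_top _ _),
        ENNReal.toReal_add (ENNReal.mul_ne_top ENNReal.ofReal_ne_top (measure_ne_top _ _))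
          (ENNReal.mul_ne_top ENNReal.ofReal_ne_top
            (ENNReal.mul_ne_top (measure_ne_top _ _) (measure_ne_top _ _))),
        ENNReal.toReal_mul, ENNReal.toReal_mul, ENNReal.toReal_mul, ENNReal.toReal_mul]
      rw [hrect hA' hB', hrect hB' hA']
      have hs := hsym hA' hB'
      have hr0 : (0:ℝ) ≤ (P₀ (A ∩ B)).toReal := ENNReal.toReal_nonneg
      have hq0 : (0:ℝ) ≤ (P₀ A).toReal * (P₀ B).toReal :=
        mul_nonneg ENNReal.toReal_nonneg ENNReal.toReal_nonneg
      rcases le_total 0 θ with hsign | hsign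
      · rw [ENNReal.ofReal_eq_zero.mpr (by linarith : 2 * (-θ) ≤ 0),
          ENNReal.toReal_ofReal (by linarith : (0:ℝ) ≤ 2 * θ),
          ENNReal.toReal_ofReal (by linarith : (0:ℝ) ≤ 2 * (1 - θ))]
        simp only [ENNReal.toReal_zero, zero_mul, add_zero]
        linarith
      · rw [ENNReal.ofReal_eq_zero.mpr (by linarith : 2 * θ ≤ 0),
          ENNReal.toReal_ofReal (by linarith : (0:ℝ) ≤ 2 * (-θ)),
          ENNReal.toReal_ofReal (by linarith : (0:ℝ) ≤ 2 * (1 - θ))]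
        simp only [ENNReal.toReal_zero, zero_mul, zero_add]
        linarith
    · simp only [Measure.add_apply, Measure.smul_apply, smul_eq_mul, measure_univ, mul_one]
      rcases le_total 0 θ with hsign | hsign
      · rw [ENNReal.ofReal_eq_zero.mpr (by linarith : 2 * (-θ) ≤ 0)]
        rw [← ENNReal.ofReal_add (by linarith : (0:ℝ) ≤ 2 * θ)
          (by linarith : (0:ℝ) ≤ 2 * (1 - θ))]
        rw [show 2 * θ + 2 * (1 - θ) = 2 by ring]
        simp [ENNReal.ofReal_ofNat]
        rw [one_add_one_eq_two]
      · rw [ENNReal.ofReal_eq_zero.mpr (by linarith : 2 * θ ≤ 0)]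
        rw [show 2 * (1 - θ) = 2 + 2 * (-θ) by ring,
          ENNReal.ofReal_add (by norm_num : (0:ℝ) ≤ 2) (by linarith : (0:ℝ) ≤ 2 * (-θ))]
        simp [ENNReal.ofReal_ofNat, add_comm]
        rw [one_add_one_eq_two]
  -- integrate g against the measure identity
  have hgint : ∀ (μ : Measure (X × X)) [IsFiniteMeasure μ], Integrable g μ := by
    intro μ _
    exact integrable_bdd hg.aestronglyMeasurable
      (fun z => by rw [Real.norm_eq_abs]; exact hgb z)
  have hswapint : ∫ z, g z ∂(M₀.map Prod.swap) = ∫ z, g z ∂M₀ := by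
    rw [integral_map measurable_swap.aemeasurable hg.aestronglyMeasurable]
    refine integral_congr_ae (Filter.Eventually.of_forall fun z => ?_)
    calc g (Prod.swap z) = g (z.2, z.1) := rfl
      _ = g (z.1, z.2) := hgs _ _
      _ = g z := by rw [Prod.mk.eta]
  have hDint : ∫ z, g z ∂Dm = ∫ x, g (x, x) ∂P₀ := by
    rw [hDmdef, integral_map hdg.aemeasurable hg.aestronglyMeasurable]
  have hInt := congrArg (fun μ : Measure (X × X) => ∫ z, g z ∂μ) key
  rw [integral_add_measure ((hgint M₀).add_measure (hgint (M₀.map Prod.swap)))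
      ((hgint Dm).smul_measure ENNReal.ofReal_ne_top),
    integral_add_measure (hgint M₀) (hgint (M₀.map Prod.swap)),
    integral_add_measure ((hgint Dm).smul_measure ENNReal.ofReal_ne_top)
      ((hgint Qm).smul_measure ENNReal.ofReal_ne_top),
    integral_smul_measure, integral_smul_measure, integral_smul_measure,
    hswapint, hDint] at hInt
  have hQint : ∫ z, g z ∂Qm = ∫ z, g z ∂(P₀.prod P₀) := by rw [hQmdef]
  rw [hQint] at hInt
  simp only [smul_eq_mul] at hInt
  rcases le_total 0 θ with hsign | hsign
  · rw [ENNReal.ofReal_eq_zero.mpr (by linarith : 2 * (-θ) ≤ 0),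
      ENNReal.toReal_ofReal (by linarith : (0:ℝ) ≤ 2 * θ),
      ENNReal.toReal_ofReal (by linarith : (0:ℝ) ≤ 2 * (1 - θ))] at hInt
    simp only [ENNReal.toReal_zero, zero_mul, add_zero] at hInt
    linarith
  · rw [ENNReal.ofReal_eq_zero.mpr (by linarith : 2 * θ ≤ 0),
      ENNReal.toReal_ofReal (by linarith : (0:ℝ) ≤ 2 * (-θ)),
      ENNReal.toReal_ofReal (by linarith : (0:ℝ) ≤ 2 * (1 - θ))] at hInt
    simp only [ENNReal.toReal_zero, zero_mul, zero_add] at hInt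
    linarith

end Aux3
section Aux4

variable {X : Type*} [MeasurableSpace X] {Ω : Type*} [MeasurableSpace Ω]
variable {k : X → X → ℝ} {H : Type*} [NormedAddCommGroup H] [InnerProductSpace ℝ H]
  [CompleteSpace H]

lemma measurable_prod_fam {P Q : Ω → Measure X} (hPm : Measurable P) (hQm : Measurable Q)
    (hP : ∀ ω, IsProbabilityMeasure (P ω)) (hQ : ∀ ω, IsProbabilityMeasure (Q ω)) :
    Measurable (fun ω => (P ω).prod (Q ω)) := by
  let κP : Kernel Ω X := ⟨P, hPm⟩
  haveI : IsMarkovKernel κP := ⟨hP⟩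
  let κQ : Kernel Ω X := ⟨Q, hQm⟩
  haveI : IsMarkovKernel κQ := ⟨hQ⟩
  have h1 := (κP ×ₖ κQ).measurable
  have h2 : ⇑(κP ×ₖ κQ) = fun ω => (P ω).prod (Q ω) :=
    funext fun ω => Kernel.prod_apply κP κQ ω
  rwa [h2] at h1

lemma kerCov_struct {Pr : Measure Ω} [IsProbabilityMeasure Pr] {P Q : Ω → Measure X}
    (hPm : Measurable P) (hQm : Measurable Q)
    (hP : ∀ ω, IsProbabilityMeasure (P ω)) (hQ : ∀ ω, IsProbabilityMeasure (Q ω))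
    {P₀ : Measure X} (hbP : Pr.bind P = P₀) (hbQ : Pr.bind Q = P₀)
    {θ : ℝ} (hθ' : θ ≤ 1)
    (hc : ∀ A : Set X, MeasurableSet A →
      rCov Pr (fun ω => (P ω A).toReal) (fun ω => (Q ω A).toReal)
        = θ * ((P₀ A).toReal * (1 - (P₀ A).toReal)))
    (hk : IsKernel k) (F : FeatureMap k H) :
    kerCov F Pr P Q = θ * (∫ x, k x x ∂P₀ - ∫ z, k z.1 z.2 ∂(P₀.prod P₀)) := by
  obtain ⟨C, hC⟩ := hk.bounded
  haveI hP₀ : IsProbabilityMeasure P₀ := by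
    rw [← hbP]; exact prob_bind hPm hP
  set m : H := meanEmb F P₀ with hmdef
  have hEP : ∫ ω, meanEmb F (P ω) ∂Pr = m := by
    have h := (integral_bind'' (Pr := Pr) hPm hP F.stronglyMeasurable (norm_F_le hk F hC)).symm
    rw [hbP] at h
    exact h
  have hEQ : ∫ ω, meanEmb F (Q ω) ∂Pr = m := by
    have h := (integral_bind'' (Pr := Pr) hQm hQ F.stronglyMeasurable (norm_F_le hk F hC)).symm
    rw [hbQ] at h
    exact h
  have hG1 : StronglyMeasurable (fun ω => meanEmb F (P ω)) := sm_meanEmb F hPm hP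
  have hG2 : StronglyMeasurable (fun ω => meanEmb F (Q ω)) := sm_meanEmb F hQm hQ
  have hG1b : ∀ ω, ‖meanEmb F (P ω)‖ ≤ Real.sqrt C := fun ω => by
    haveI := hP ω; exact norm_meanEmb_le hk F hC _
  have hG2b : ∀ ω, ‖meanEmb F (Q ω)‖ ≤ Real.sqrt C := fun ω => by
    haveI := hQ ω; exact norm_meanEmb_le hk F hC _
  have hmb : ‖m‖ ≤ Real.sqrt C := norm_meanEmb_le hk F hC _
  have iG1 : Integrable (fun ω => meanEmb F (P ω)) Pr :=
    integrable_bdd hG1.aestronglyMeasurable hG1b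
  have iG2 : Integrable (fun ω => meanEmb F (Q ω)) Pr :=
    integrable_bdd hG2.aestronglyMeasurable hG2b
  have innerb : ∀ (a b : H), ‖a‖ ≤ Real.sqrt C → ‖b‖ ≤ Real.sqrt C →
      ‖(⟪a, b⟫ : ℝ)‖ ≤ Real.sqrt C * Real.sqrt C := by
    intro a b ha hb
    rw [Real.norm_eq_abs]
    exact le_trans (abs_real_inner_le_norm a b)
      (mul_le_mul ha hb (norm_nonneg _) (Real.sqrt_nonneg C))
  have i11 : Integrable (fun ω => (⟪meanEmb F (P ω), meanEmb F (Q ω)⟫ : ℝ)) Pr :=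
    integrable_bdd (hG1.inner hG2).aestronglyMeasurable
      (fun ω => innerb _ _ (hG1b ω) (hG2b ω))
  have i12 : Integrable (fun ω => (⟪meanEmb F (P ω), m⟫ : ℝ)) Pr :=
    integrable_bdd (hG1.inner stronglyMeasurable_const).aestronglyMeasurable
      (fun ω => innerb _ _ (hG1b ω) hmb)
  have i21 : Integrable (fun ω => (⟪m, meanEmb F (Q ω)⟫ : ℝ)) Pr :=
    integrable_bdd (stronglyMeasurable_const.inner hG2).aestronglyMeasurable
      (fun ω => innerb _ _ hmb (hG2b ω))
  have hker : kerCov F Pr P Q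
      = ∫ ω, (⟪meanEmb F (P ω) - m, meanEmb F (Q ω) - m⟫ : ℝ) ∂Pr := by
    rw [kerCov, hEP, hEQ]
  have hpoint : ∀ a b : H, (⟪a - m, b - m⟫ : ℝ)
      = ⟪a, b⟫ - ⟪a, m⟫ - ⟪m, b⟫ + ⟪m, m⟫ := by
    intro a b
    rw [inner_sub_left, inner_sub_right, inner_sub_right]
    ring
  have e2 : ∫ ω, (⟪meanEmb F (P ω), m⟫ : ℝ) ∂Pr = ⟪m, m⟫ := by
    calc ∫ ω, (⟪meanEmb F (P ω), m⟫ : ℝ) ∂Pr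
        = ∫ ω, (⟪m, meanEmb F (P ω)⟫ : ℝ) ∂Pr :=
          integral_congr_ae (Filter.Eventually.of_forall fun ω => real_inner_comm _ _)
      _ = ⟪m, ∫ ω, meanEmb F (P ω) ∂Pr⟫ := integral_inner iG1 m
      _ = ⟪m, m⟫ := by rw [hEP]
  have e3 : ∫ ω, (⟪m, meanEmb F (Q ω)⟫ : ℝ) ∂Pr = ⟪m, m⟫ :=
    (integral_inner iG2 m).trans (by rw [hEQ])
  have hker2 : kerCov F Pr P Q
      = ∫ ω, (⟪meanEmb F (P ω), meanEmb F (Q ω)⟫ : ℝ) ∂Pr - ⟪m, m⟫ := by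
    rw [hker]
    have : (fun ω => (⟪meanEmb F (P ω) - m, meanEmb F (Q ω) - m⟫ : ℝ))
        = fun ω => ⟪meanEmb F (P ω), meanEmb F (Q ω)⟫ - ⟪meanEmb F (P ω), m⟫
            - ⟪m, meanEmb F (Q ω)⟫ + ⟪m, m⟫ := funext fun ω => hpoint _ _
    have j2 : Integrable (fun ω => (⟪meanEmb F (P ω), meanEmb F (Q ω)⟫ : ℝ)
        - ⟪meanEmb F (P ω), m⟫) Pr := i11.sub i12
    have j3 : Integrable (fun ω => (⟪meanEmb F (P ω), meanEmb F (Q ω)⟫ : ℝ)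
        - ⟪meanEmb F (P ω), m⟫ - ⟪m, meanEmb F (Q ω)⟫) Pr := j2.sub i21
    rw [this, integral_add j3 (integrable_const _),
      integral_sub j2 i21, integral_sub i11 i12, integral_const, e2, e3]
    simp [measure_univ]
  -- identify the first term with the bind integral
  have hprodm := measurable_prod_fam hPm hQm hP hQ
  have hprodp : ∀ ω, IsProbabilityMeasure ((P ω).prod (Q ω)) := fun ω => by
    haveI := hP ω; haveI := hQ ω; infer_instance
  have hgm : Measurable (fun z : X × X => k z.1 z.2) := hk.measurable
  have hfirst : ∫ ω, (⟪meanEmb F (P ω), meanEmb F (Q ω)⟫ : ℝ) ∂Pr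
      = ∫ z, k z.1 z.2 ∂(Pr.bind (fun ω => (P ω).prod (Q ω))) := by
    rw [integral_bind'' hprodm hprodp hgm.stronglyMeasurable
      (C := C) (fun z => by rw [Real.norm_eq_abs]; exact hC z.1 z.2)]
    refine integral_congr_ae (Filter.Eventually.of_forall fun ω => ?_)
    haveI := hP ω; haveI := hQ ω
    exact inner_meanEmb hk F (P ω) (Q ω)
  have hmm : (⟪m, m⟫ : ℝ) = ∫ z, k z.1 z.2 ∂(P₀.prod P₀) := inner_meanEmb hk F P₀ P₀
  rw [hker2, hfirst, hmm,
    bind_prod_integral hPm hQm hP hQ hbP hbQ hθ' hc hgm (fun z => hC z.1 z.2) hk.symm]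
  ring

end Aux4
section Aux5

variable {X : Type*} [MeasurableSpace X] {Ω : Type*} [MeasurableSpace Ω]

lemma const_of_rVar_zero {Pr : Measure Ω} [IsProbabilityMeasure Pr] {U : Ω → ℝ}
    (hU : Measurable U) (hb : ∀ ω, |U ω| ≤ 1) (h : rVar Pr U = 0) :
    ∃ c : ℝ, ∀ᵐ ω ∂Pr, U ω = c := by
  set c := ∫ ω, U ω ∂Pr with hc
  refine ⟨c, ?_⟩
  have hint : Integrable (fun ω => (U ω - c) * (U ω - c)) Pr := by
    refine integrable_bdd (((hU.sub measurable_const).mul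
      (hU.sub measurable_const))).aestronglyMeasurable (C := (1 + |c|) * (1 + |c|)) fun ω => ?_
    rw [Real.norm_eq_abs, abs_mul]
    have h1 : |U ω - c| ≤ 1 + |c| := (abs_sub _ _).trans (by gcongr; exact hb ω)
    exact mul_le_mul h1 h1 (abs_nonneg _) (by positivity)
  have h0 : ∫ ω, (U ω - c) * (U ω - c) ∂Pr = 0 := h
  have := (integral_eq_zero_iff_of_nonneg (fun ω => mul_self_nonneg _) hint).mp h0
  filter_upwards [this] with ω hω
  have : (U ω - c) * (U ω - c) = 0 := hω
  have := mul_self_eq_zero.mp this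
  linarith

lemma rCorr_algebra {η l₁ l₂ V : ℝ} (hV : 0 < V) (hl₁ : 0 < l₁) (hl₂ : 0 < l₂) :
    (η * V) / (Real.sqrt (l₁ * V) * Real.sqrt (l₂ * V)) = η / Real.sqrt (l₁ * l₂) := by
  have h : Real.sqrt (l₁ * V) * Real.sqrt (l₂ * V) = Real.sqrt (l₁ * l₂) * V := by
    rw [← Real.sqrt_mul (by positivity), show l₁ * V * (l₂ * V) = l₁ * l₂ * V ^ 2 by ring,
      Real.sqrt_mul (by positivity), Real.sqrt_sq hV.le]
  rw [h, mul_comm (Real.sqrt (l₁ * l₂)) V, mul_comm η V, mul_div_mul_left _ _ hV.ne']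

end Aux5

section Aux6

variable {X : Type*} [TopologicalSpace X] [PolishSpace X]
  [MeasurableSpace X] [BorelSpace X]
  {Ω : Type*} [MeasurableSpace Ω]
variable {k : X → X → ℝ} {H : Type*} [NormedAddCommGroup H] [InnerProductSpace ℝ H]
  [CompleteSpace H]

lemma V_pos {Pr : Measure Ω} [IsProbabilityMeasure Pr] {P : Ω → Measure X}
    (hPm : Measurable P) (hP : ∀ ω, IsProbabilityMeasure (P ω))
    (hnd : ¬ ∃ Q : Measure X, ∀ᵐ ω ∂Pr, P ω = Q)
    {P₀ : Measure X} (hbP : Pr.bind P = P₀)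
    (hk : IsKernel k) (hkinj : IsInjectiveKernel k) (F : FeatureMap k H) :
    0 < ∫ x, k x x ∂P₀ - ∫ z, k z.1 z.2 ∂(P₀.prod P₀) := by
  obtain ⟨C, hC⟩ := hk.bounded
  haveI hP₀ : IsProbabilityMeasure P₀ := by rw [← hbP]; exact prob_bind hPm hP
  have hFinj : Function.Injective F.toFun := by
    intro x y hxy
    refine hkinj (funext fun z => ?_)
    show k x z = k y z
    rw [← F.repro x z, ← F.repro y z, hxy]
  -- expand the "variance" as half the expected squared distance
  have hm1 : Measurable (fun z : X × X => k z.1 z.1) :=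
    hk.measurable.comp (measurable_fst.prodMk measurable_fst)
  have hm2 : Measurable (fun z : X × X => k z.2 z.2) :=
    hk.measurable.comp (measurable_snd.prodMk measurable_snd)
  have hm3 : Measurable (fun z : X × X => k z.1 z.2) := hk.measurable
  have hi1 : Integrable (fun z : X × X => k z.1 z.1) (P₀.prod P₀) :=
    integrable_bdd hm1.aestronglyMeasurable
      (fun z => by rw [Real.norm_eq_abs]; exact hC z.1 z.1)
  have hi2 : Integrable (fun z : X × X => k z.2 z.2) (P₀.prod P₀) :=
    integrable_bdd hm2.aestronglyMeasurable
      (fun z => by rw [Real.norm_eq_abs]; exact hC z.2 z.2)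
  have hi3 : Integrable (fun z : X × X => k z.1 z.2) (P₀.prod P₀) :=
    integrable_bdd hm3.aestronglyMeasurable
      (fun z => by rw [Real.norm_eq_abs]; exact hC z.1 z.2)
  have hdiag1 : ∫ z, k z.1 z.1 ∂(P₀.prod P₀) = ∫ x, k x x ∂P₀ := by
    rw [integral_prod _ hi1]
    simp [measure_univ]
  have hdiag2 : ∫ z, k z.2 z.2 ∂(P₀.prod P₀) = ∫ x, k x x ∂P₀ := by
    rw [integral_prod _ hi2]
    simp [measure_univ]
  have hWpt : ∀ z : X × X, ‖F.toFun z.1 - F.toFun z.2‖ ^ 2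
      = k z.1 z.1 - 2 * k z.1 z.2 + k z.2 z.2 := by
    intro z
    rw [norm_sub_sq_real, ← F.repro z.1 z.1, ← F.repro z.1 z.2, ← F.repro z.2 z.2]
    rw [real_inner_self_eq_norm_sq, real_inner_self_eq_norm_sq]
  have hWint : Integrable (fun z : X × X => ‖F.toFun z.1 - F.toFun z.2‖ ^ 2) (P₀.prod P₀) := by
    have : (fun z : X × X => ‖F.toFun z.1 - F.toFun z.2‖ ^ 2)
        = fun z => k z.1 z.1 - 2 * k z.1 z.2 + k z.2 z.2 := funext hWpt
    rw [this]
    exact (hi1.sub (hi3.const_mul 2)).add hi2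
  have hW : ∫ z, ‖F.toFun z.1 - F.toFun z.2‖ ^ 2 ∂(P₀.prod P₀)
      = 2 * (∫ x, k x x ∂P₀ - ∫ z, k z.1 z.2 ∂(P₀.prod P₀)) := by
    have h1 : ∫ z, ‖F.toFun z.1 - F.toFun z.2‖ ^ 2 ∂(P₀.prod P₀)
        = ∫ z, (k z.1 z.1 - 2 * k z.1 z.2 + k z.2 z.2) ∂(P₀.prod P₀) :=
      integral_congr_ae (Filter.Eventually.of_forall hWpt)
    have h2 : Integrable (fun z : X × X => k z.1 z.1 - 2 * k z.1 z.2) (P₀.prod P₀) :=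
      hi1.sub (hi3.const_mul 2)
    rw [h1, integral_add h2 hi2, integral_sub hi1 (hi3.const_mul 2), integral_const_mul,
      hdiag1, hdiag2]
    ring
  have hWnonneg : 0 ≤ ∫ z, ‖F.toFun z.1 - F.toFun z.2‖ ^ 2 ∂(P₀.prod P₀) :=
    integral_nonneg fun z => by positivity
  by_contra hcon
  push_neg at hcon
  have hV0 : ∫ x, k x x ∂P₀ - ∫ z, k z.1 z.2 ∂(P₀.prod P₀) = 0 := by linarith [hW ▸ hWnonneg]
  have hW0 : ∫ z, ‖F.toFun z.1 - F.toFun z.2‖ ^ 2 ∂(P₀.prod P₀) = 0 := by rw [hW, hV0]; ring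
  have hae := (integral_eq_zero_iff_of_nonneg (fun z => by positivity) hWint).mp hW0
  have haediag : ∀ᵐ z : X × X ∂(P₀.prod P₀), z.1 = z.2 := by
    filter_upwards [hae] with z hz
    have : ‖F.toFun z.1 - F.toFun z.2‖ ^ 2 = 0 := hz
    have h1 : F.toFun z.1 = F.toFun z.2 := by
      rw [pow_eq_zero_iff (by norm_num), norm_eq_zero, sub_eq_zero] at this
      exact this
    exact hFinj h1
  -- P₀ is a Dirac measure
  have hDc : MeasurableSet {z : X × X | ¬ z.1 = z.2} :=
    (isClosed_diagonal.measurableSet).compl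
  have hzero : (P₀.prod P₀) {z : X × X | ¬ z.1 = z.2} = 0 := by
    have := haediag
    rwa [ae_iff] at this
  rw [Measure.prod_apply hDc] at hzero
  have haex : ∀ᵐ x ∂P₀, P₀ (Prod.mk x ⁻¹' {z : X × X | ¬ z.1 = z.2}) = 0 :=
    (lintegral_eq_zero_iff (measurable_measure_prodMk_left hDc)).mp hzero
  haveI : (ae P₀).NeBot := ae_neBot.mpr (IsProbabilityMeasure.ne_zero P₀)
  obtain ⟨x₀, hx₀⟩ := haex.exists
  have hpre : Prod.mk x₀ ⁻¹' {z : X × X | ¬ z.1 = z.2} = {x₀}ᶜ := by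
    ext y
    simp [eq_comm]
  rw [hpre] at hx₀
  have hsing : P₀ {x₀} = 1 :=
    (prob_compl_eq_zero_iff (measurableSet_singleton x₀)).mp hx₀
  -- each P ω is a.s. the Dirac measure at x₀
  have hmeas : Measurable (fun ω => P ω {x₀}) :=
    (Measure.measurable_coe (measurableSet_singleton x₀)).comp hPm
  have h1 : ∫⁻ ω, P ω {x₀} ∂Pr = 1 := by
    rw [← Measure.bind_apply (measurableSet_singleton x₀) hPm.aemeasurable, hbP, hsing]
  have h2 : ∫⁻ ω, (1 - P ω {x₀}) ∂Pr = 0 := by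
    rw [lintegral_sub hmeas (by rw [h1]; exact ENNReal.one_ne_top)
      (ae_of_all _ fun ω => by haveI := hP ω; exact prob_le_one), h1, lintegral_one, measure_univ]
    simp
  have haeone : ∀ᵐ ω ∂Pr, P ω {x₀} = 1 := by
    have := (lintegral_eq_zero_iff (measurable_const.sub hmeas)).mp h2
    filter_upwards [this] with ω hω
    haveI := hP ω
    have hle : P ω {x₀} ≤ 1 := prob_le_one
    have : (1 : ℝ≥0∞) - P ω {x₀} = 0 := hω
    exact le_antisymm hle (tsub_eq_zero_iff_le.mp this)
  refine hnd ⟨Measure.dirac x₀, ?_⟩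
  filter_upwards [haeone] with ω hω
  haveI := hP ω
  ext s hs
  rw [Measure.dirac_apply' x₀ hs]
  by_cases hx : x₀ ∈ s
  · have h1 : (1 : ℝ≥0∞) ≤ P ω s := by
      rw [← hω]
      exact measure_mono (Set.singleton_subset_iff.mpr hx)
    have : P ω s = 1 := le_antisymm prob_le_one h1
    simp [this, Set.indicator_of_mem hx]
  · have hsub : s ⊆ {x₀}ᶜ := Set.subset_compl_singleton_iff.mpr hx
    have hc0 : P ω {x₀}ᶜ = 0 := by
      rw [measure_compl (measurableSet_singleton x₀) (measure_ne_top _ _), hω, measure_univ]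
      simp
    have : P ω s = 0 := le_antisymm (le_trans (measure_mono hsub) hc0.le) zero_le
    simp [this, Set.indicator_of_notMem hx]

end Aux6
theorem stmt_13
    {X : Type*} [TopologicalSpace X] [PolishSpace X] [LocallyCompactSpace X]
    [MeasurableSpace X] [BorelSpace X]
    {Ω : Type*} [MeasurableSpace Ω] (Pr : Measure Ω) [IsProbabilityMeasure Pr]
    (P₁ P₂ : Ω → Measure X)
    (hP₁ : ∀ ω, IsProbabilityMeasure (P₁ ω)) (hP₂ : ∀ ω, IsProbabilityMeasure (P₂ ω))
    (hP₁m : Measurable P₁) (hP₂m : Measurable P₂)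
    -- `P̃₁` and `P̃₂` are not deterministic
    (hnd₁ : ¬ ∃ Q : Measure X, ∀ᵐ ω ∂Pr, P₁ ω = Q)
    (hnd₂ : ¬ ∃ Q : Measure X, ∀ᵐ ω ∂Pr, P₂ ω = Q)
    -- common mean measure `P₀`
    (P₀ : Measure X) (hP₀₁ : Pr.bind P₁ = P₀) (hP₀₂ : Pr.bind P₂ = P₀)
    -- structural covariance and variance assumptions
    (η : ℝ) (hη : η ∈ Set.Icc (-1 : ℝ) 1)
    (hcov : ∀ A : Set X, MeasurableSet A →
      rCov Pr (fun ω => (P₁ ω A).toReal) (fun ω => (P₂ ω A).toReal)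
        = η * ((P₀ A).toReal * (1 - (P₀ A).toReal)))
    (lam₁ lam₂ : ℝ) (hlam₁ : lam₁ ∈ Set.Ioc (0 : ℝ) 1) (hlam₂ : lam₂ ∈ Set.Ioc (0 : ℝ) 1)
    (hvar₁ : ∀ A : Set X, MeasurableSet A →
      rVar Pr (fun ω => (P₁ ω A).toReal) = lam₁ * ((P₀ A).toReal * (1 - (P₀ A).toReal)))
    (hvar₂ : ∀ A : Set X, MeasurableSet A →
      rVar Pr (fun ω => (P₂ ω A).toReal) = lam₂ * ((P₀ A).toReal * (1 - (P₀ A).toReal)))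
    -- an injective kernel with a realization of its RKHS
    {k : X → X → ℝ} (hk : IsKernel k) (hkinj : IsInjectiveKernel k)
    {H : Type*} [NormedAddCommGroup H] [InnerProductSpace ℝ H] [CompleteSpace H]
    (F : FeatureMap k H) :
    kerCorr F Pr P₁ P₂ = η / Real.sqrt (lam₁ * lam₂) ∧
    ∀ A : Set X, MeasurableSet A →
      (¬ ∃ c : ℝ, ∀ᵐ ω ∂Pr, (P₁ ω A).toReal = c) →
      (¬ ∃ c : ℝ, ∀ᵐ ω ∂Pr, (P₂ ω A).toReal = c) →
      rCorr Pr (fun ω => (P₁ ω A).toReal) (fun ω => (P₂ ω A).toReal)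
        = η / Real.sqrt (lam₁ * lam₂) := by
  obtain ⟨hη1, hη2⟩ := hη
  obtain ⟨hl1, hl1'⟩ := hlam₁
  obtain ⟨hl2, hl2'⟩ := hlam₂
  set V := ∫ x, k x x ∂P₀ - ∫ z, k z.1 z.2 ∂(P₀.prod P₀) with hVdef
  have hVpos : 0 < V := V_pos hP₁m hP₁ hnd₁ hP₀₁ hk hkinj F
  have hcov' : kerCov F Pr P₁ P₂ = η * V :=
    kerCov_struct hP₁m hP₂m hP₁ hP₂ hP₀₁ hP₀₂ hη2 hcov hk F
  have hvar₁' : kerCov F Pr P₁ P₁ = lam₁ * V :=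
    kerCov_struct hP₁m hP₁m hP₁ hP₁ hP₀₁ hP₀₁ hl1' (fun A hA => hvar₁ A hA) hk F
  have hvar₂' : kerCov F Pr P₂ P₂ = lam₂ * V :=
    kerCov_struct hP₂m hP₂m hP₂ hP₂ hP₀₂ hP₀₂ hl2' (fun A hA => hvar₂ A hA) hk F
  constructor
  · unfold kerCorr
    rw [show kerVar F Pr P₁ = lam₁ * V from hvar₁',
      show kerVar F Pr P₂ = lam₂ * V from hvar₂', hcov']
    exact rCorr_algebra hVpos hl1 hl2
  · intro A hA hnc₁ hnc₂
    haveI hP₀p : IsProbabilityMeasure P₀ := by rw [← hP₀₁]; exact prob_bind hP₁m hP₁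
    set p := (P₀ A).toReal with hpdef
    have hUm : Measurable (fun ω => (P₁ ω A).toReal) :=
      ((Measure.measurable_coe hA).comp hP₁m).ennreal_toReal
    have hUb : ∀ ω, |(P₁ ω A).toReal| ≤ 1 := fun ω => by
      rw [abs_of_nonneg ENNReal.toReal_nonneg]
      haveI := hP₁ ω
      have := ENNReal.toReal_mono (by simp) (prob_le_one (μ := P₁ ω) (s := A))
      simpa using this
    have hp1 : p ≤ 1 := by
      have := ENNReal.toReal_mono (by simp) (prob_le_one (μ := P₀) (s := A))
      simpa using this
    have ht : 0 < p * (1 - p) := by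
      have h0 : 0 ≤ p * (1 - p) :=
        mul_nonneg ENNReal.toReal_nonneg (by linarith)
      have hne : p * (1 - p) ≠ 0 := fun h =>
        hnc₁ (const_of_rVar_zero hUm hUb (by rw [hvar₁ A hA, h, mul_zero]))
      exact lt_of_le_of_ne h0 (Ne.symm hne)
    unfold rCorr
    rw [show rVar Pr (fun ω => (P₁ ω A).toReal) = lam₁ * (p * (1 - p)) from hvar₁ A hA,
      show rVar Pr (fun ω => (P₂ ω A).toReal) = lam₂ * (p * (1 - p)) from hvar₂ A hA,
      hcov A hA]
    exact rCorr_algebra ht hl1 hl2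

end
end

section
/- Let f : Y × X → [0,1] be a probability density kernel (so that y ↦ f(y;x) is a probability density on Y with respect to the reference measure dy for each x ∈ X), and let k be a bounded, measurable, symmetric, positive-definite kernel on Y × Y. Then k_f(x₁,x₂) := ∬_{Y×Y} k(y₁,y₂) f(y₁;x₁) f(y₂;x₂) dy₁ dy₂ is a bounded, measurable, symmetric, positive-definite kernel on X × X, and for any random probability measures P̃₁, P̃₂ on X one has Cov_k(f_{P̃₁}, f_{P̃₂}) = Cov_{k_f}(P̃₁, P̃₂), where f_P denotes the random probability on Y with density f_P(y) = ∫_X f(y;x) dP(x). Moreover, if the family {f(·;x)}_x is identifiable and k is characteristic, then k_f is characteristic. -/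
open MeasureTheory ProbabilityTheory Filter
open scoped RealInnerProductSpace ENNReal NNReal

noncomputable section

/-- A probability density kernel `f : Y × X → [0,1]` with respect to the reference
measure `ν` on `Y`. -/
structure IsDensityKernel {Y X : Type*} [MeasurableSpace Y] [MeasurableSpace X]
    (ν : Measure Y) (f : Y → X → ℝ) : Prop where
  measurable : Measurable (Function.uncurry f)
  nonneg : ∀ y x, 0 ≤ f y x
  le_one : ∀ y x, f y x ≤ 1
  integral_one : ∀ x, ∫ y, f y x ∂ν = 1

/-- The mixture density `f_P(y) = ∫ f(y;x) dP(x)`. -/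
def mixDensity {Y X : Type*} [MeasurableSpace X] (f : Y → X → ℝ) (P : Measure X) :
    Y → ℝ := fun y => ∫ x, f y x ∂P

/-- The mixture measure on `Y` with density `f_P` with respect to `ν`. -/
def mixMeasure {Y X : Type*} [MeasurableSpace Y] [MeasurableSpace X]
    (ν : Measure Y) (f : Y → X → ℝ) (P : Measure X) : Measure Y :=
  ν.withDensity fun y => ENNReal.ofReal (mixDensity f P y)

/-- The updated kernel `k_f(x₁,x₂) = ∬ k(y₁,y₂) f(y₁;x₁) f(y₂;x₂) dy₁ dy₂`. -/
def updatedKernel {Y X : Type*} [MeasurableSpace Y] (ν : Measure Y)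
    (k : Y → Y → ℝ) (f : Y → X → ℝ) : X → X → ℝ := fun x₁ x₂ =>
  ∫ y₁, ∫ y₂, k y₁ y₂ * f y₁ x₁ * f y₂ x₂ ∂ν ∂ν

/-- The family `{f(·;x)}ₓ` is identifiable: mixtures determine the mixing measure. -/
def Identifiable {Y X : Type*} [MeasurableSpace Y] [MeasurableSpace X]
    (ν : Measure Y) (f : Y → X → ℝ) : Prop :=
  ∀ P₁ P₂ : Measure X, IsProbabilityMeasure P₁ → IsProbabilityMeasure P₂ →
    mixDensity f P₁ =ᵐ[ν] mixDensity f P₂ → P₁ = P₂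

/-- A kernel is characteristic if the kernel mean embedding
`μ ↦ (y ↦ ∫ k(x,y) dμ(x))` is injective on probability measures. -/
def IsCharacteristic {Z : Type*} [MeasurableSpace Z] (k : Z → Z → ℝ) : Prop :=
  ∀ μ₁ μ₂ : Measure Z, IsProbabilityMeasure μ₁ → IsProbabilityMeasure μ₂ →
    (∀ y, ∫ x, k x y ∂μ₁ = ∫ x, k x y ∂μ₂) → μ₁ = μ₂

end

noncomputable section Aux14

open Function

variable {X : Type*} [MeasurableSpace X] {Y : Type*} [MeasurableSpace Y]

/-- integrability of a bounded a.e. strongly measurable function w.r.t. a finite measure -/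
lemma aux14_int_of_bdd {Z E : Type*} [MeasurableSpace Z] [NormedAddCommGroup E]
    {G : Z → E} {μ : Measure Z} [IsFiniteMeasure μ]
    (hG : AEStronglyMeasurable G μ) {B : ℝ} (hB : ∀ z, ‖G z‖ ≤ B) :
    Integrable G μ :=
  (integrable_const B).mono' hG (Filter.Eventually.of_forall hB)

lemma aux14_f_int {ν : Measure Y} {f : Y → X → ℝ} (hf : IsDensityKernel ν f) (x : X) :
    Integrable (fun y => f y x) ν := by
  by_contra h
  have h1 := hf.integral_one x
  rw [MeasureTheory.integral_undef h] at h1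
  norm_num at h1

lemma aux14_f_meas {ν : Measure Y} {f : Y → X → ℝ} (hf : IsDensityKernel ν f) (x : X) :
    Measurable (fun y => f y x) :=
  hf.measurable.comp (measurable_id.prodMk measurable_const)

/-- bound on a feature map from a bound on the kernel -/
lemma aux14_F_bdd {k : Y → Y → ℝ}
    {H : Type*} [NormedAddCommGroup H] [InnerProductSpace ℝ H]
    (hk : IsKernel k) (F : FeatureMap k H) :
    ∃ B : ℝ, 0 ≤ B ∧ ∀ y, ‖F.toFun y‖ ≤ B := by
  obtain ⟨C, hC⟩ := hk.bounded
  refine ⟨Real.sqrt (max C 0), Real.sqrt_nonneg _, fun y => ?_⟩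
  have h2 : ‖F.toFun y‖ ^ 2 ≤ max C 0 := by
    rw [← real_inner_self_eq_norm_sq, F.repro]
    exact le_max_of_le_left ((le_abs_self _).trans (hC y y))
  calc ‖F.toFun y‖ = Real.sqrt (‖F.toFun y‖ ^ 2) := by
        rw [Real.sqrt_sq (norm_nonneg _)]
    _ ≤ Real.sqrt (max C 0) := Real.sqrt_le_sqrt h2

variable {ν : Measure Y} [SigmaFinite ν] {f : Y → X → ℝ} {k : Y → Y → ℝ}
  {H : Type*} [NormedAddCommGroup H] [InnerProductSpace ℝ H] [CompleteSpace H]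

/-- The feature map of the updated kernel, valued in the RKHS of `k`. -/
def phiMap (ν : Measure Y) (f : Y → X → ℝ) (F : FeatureMap k H) : X → H :=
  fun x => ∫ y, f y x • F.toFun y ∂ν

lemma aux14_phi_int (hf : IsDensityKernel ν f) (F : FeatureMap k H)
    {B : ℝ} (hB : ∀ y, ‖F.toFun y‖ ≤ B) (x : X) :
    Integrable (fun y => f y x • F.toFun y) ν := by
  refine ((aux14_f_int hf x).mul_const B).mono'
    (((aux14_f_meas hf x).stronglyMeasurable.smul F.stronglyMeasurable).aestronglyMeasurable)
    (Filter.Eventually.of_forall fun y => ?_)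
  rw [norm_smul, Real.norm_eq_abs, abs_of_nonneg (hf.nonneg y x)]
  exact mul_le_mul_of_nonneg_left (hB y) (hf.nonneg y x)

lemma aux14_phi_norm_le (hf : IsDensityKernel ν f) (F : FeatureMap k H)
    {B : ℝ} (hB : ∀ y, ‖F.toFun y‖ ≤ B) (x : X) :
    ‖phiMap ν f F x‖ ≤ B := by
  have h1 : ‖phiMap ν f F x‖ ≤ ∫ y, ‖f y x • F.toFun y‖ ∂ν :=
    norm_integral_le_integral_norm _
  have h2 : ∫ y, ‖f y x • F.toFun y‖ ∂ν ≤ ∫ y, f y x * B ∂ν := by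
    refine integral_mono (aux14_phi_int hf F hB x).norm ((aux14_f_int hf x).mul_const B)
      fun y => ?_
    rw [norm_smul, Real.norm_eq_abs, abs_of_nonneg (hf.nonneg y x)]
    exact mul_le_mul_of_nonneg_left (hB y) (hf.nonneg y x)
  have h3 : ∫ y, f y x * B ∂ν = B := by
    rw [integral_mul_const, hf.integral_one, one_mul]
  linarith

lemma aux14_phi_sm (hf : IsDensityKernel ν f) (F : FeatureMap k H) :
    StronglyMeasurable (phiMap ν f F) := by
  have h : StronglyMeasurable (fun p : X × Y => f p.2 p.1 • F.toFun p.2) :=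
    ((hf.measurable.comp measurable_swap).stronglyMeasurable).smul
      (F.stronglyMeasurable.comp_measurable measurable_snd)
  exact h.integral_prod_right'

lemma aux14_inner_phi_left (hf : IsDensityKernel ν f) (F : FeatureMap k H)
    {B : ℝ} (hB : ∀ y, ‖F.toFun y‖ ≤ B) (x₁ : X) (v : H) :
    ⟪phiMap ν f F x₁, v⟫ = ∫ y, f y x₁ * ⟪F.toFun y, v⟫ ∂ν := by
  rw [real_inner_comm, phiMap, ← integral_inner (aux14_phi_int hf F hB x₁) v]
  refine integral_congr_ae (Filter.Eventually.of_forall fun y => ?_)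
  beta_reduce
  rw [real_inner_smul_right, real_inner_comm]

lemma aux14_inner_phi (hf : IsDensityKernel ν f) (F : FeatureMap k H)
    {B : ℝ} (hB : ∀ y, ‖F.toFun y‖ ≤ B) (x₁ x₂ : X) :
    ⟪phiMap ν f F x₁, phiMap ν f F x₂⟫ = updatedKernel ν k f x₁ x₂ := by
  rw [aux14_inner_phi_left hf F hB, updatedKernel]
  refine integral_congr_ae (Filter.Eventually.of_forall fun y₁ => ?_)
  beta_reduce
  have h1 : ⟪F.toFun y₁, phiMap ν f F x₂⟫ = ∫ y₂, f y₂ x₂ * k y₁ y₂ ∂ν := by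
    rw [phiMap, ← integral_inner (aux14_phi_int hf F hB x₂) (F.toFun y₁)]
    refine integral_congr_ae (Filter.Eventually.of_forall fun y₂ => ?_)
    beta_reduce
    rw [real_inner_smul_right, F.repro]
  rw [h1, ← integral_const_mul]
  refine integral_congr_ae (Filter.Eventually.of_forall fun y₂ => ?_)
  beta_reduce
  ring

/-- inner product of two mean embeddings as a double integral of the kernel -/
lemma aux14_inner_emb {Z : Type*} [MeasurableSpace Z] {κ : Z → Z → ℝ}
    {H' : Type*} [NormedAddCommGroup H'] [InnerProductSpace ℝ H'] [CompleteSpace H']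
    {G : Z → H'} (hrepro : ∀ z z', ⟪G z, G z'⟫ = κ z z')
    {P Q : Measure Z} (hIP : Integrable G P) (hIQ : Integrable G Q) :
    ⟪∫ z, G z ∂P, ∫ z, G z ∂Q⟫ = ∫ z, ∫ z', κ z z' ∂Q ∂P := by
  rw [real_inner_comm, ← integral_inner hIP]
  refine integral_congr_ae (Filter.Eventually.of_forall fun z => ?_)
  beta_reduce
  rw [real_inner_comm, ← integral_inner hIQ]
  exact integral_congr_ae (Filter.Eventually.of_forall fun z' => hrepro z z')

lemma aux14_prod_int (hf : IsDensityKernel ν f)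
    {E : Type*} [NormedAddCommGroup E] {G : Y → E} (hGsm : StronglyMeasurable G)
    {B : ℝ} [Module ℝ E] [IsBoundedSMul ℝ E] (hB : ∀ y, ‖G y‖ ≤ B)
    (P : Measure X) [IsProbabilityMeasure P] :
    Integrable (fun p : Y × X => f p.1 p.2 • G p.1) (ν.prod P) := by
  have hsm : AEStronglyMeasurable (fun p : Y × X => f p.1 p.2 • G p.1) (ν.prod P) :=
    (hf.measurable.stronglyMeasurable.smul (hGsm.comp_measurable measurable_fst)).aestronglyMeasurable
  refine ⟨hsm, ?_⟩
  show ∫⁻ p, (‖f p.1 p.2 • G p.1‖₊ : ℝ≥0∞) ∂(ν.prod P) < ⊤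
  have hle : ∀ p : Y × X, (‖f p.1 p.2 • G p.1‖₊ : ℝ≥0∞)
      ≤ ENNReal.ofReal (f p.1 p.2) * ENNReal.ofReal B := by
    intro p
    haveI : NormSMulClass ℝ E := NormedDivisionRing.toNormSMulClass
    rw [← enorm_eq_nnnorm, ← ofReal_norm, norm_smul, Real.norm_eq_abs,
      abs_of_nonneg (hf.nonneg p.1 p.2), ENNReal.ofReal_mul (hf.nonneg p.1 p.2)]
    exact mul_le_mul_right (ENNReal.ofReal_le_ofReal (hB p.1)) _
  have hmeas : Measurable (fun p : Y × X => ENNReal.ofReal (f p.1 p.2)) :=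
    (hf.measurable).ennreal_ofReal
  calc ∫⁻ p, (‖f p.1 p.2 • G p.1‖₊ : ℝ≥0∞) ∂(ν.prod P)
      ≤ ∫⁻ p, ENNReal.ofReal (f p.1 p.2) * ENNReal.ofReal B ∂(ν.prod P) :=
        MeasureTheory.lintegral_mono hle
    _ = ∫⁻ y, ∫⁻ x, ENNReal.ofReal (f y x) * ENNReal.ofReal B ∂P ∂ν := by
        rw [MeasureTheory.lintegral_prod (fun p : Y × X => ENNReal.ofReal (f p.1 p.2) * ENNReal.ofReal B) ((hmeas.mul measurable_const).aemeasurable)]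
    _ = ∫⁻ x, ∫⁻ y, ENNReal.ofReal (f y x) * ENNReal.ofReal B ∂ν ∂P := by
        exact MeasureTheory.lintegral_lintegral_swap
          ((hmeas.mul measurable_const).aemeasurable)
    _ = ∫⁻ x, ENNReal.ofReal B ∂P := by
        refine lintegral_congr fun x => ?_
        rw [MeasureTheory.lintegral_mul_const _ ((aux14_f_meas hf x).ennreal_ofReal),
          ← MeasureTheory.ofReal_integral_eq_lintegral_ofReal (aux14_f_int hf x)
            (Filter.Eventually.of_forall fun y => hf.nonneg y x),
          hf.integral_one, ENNReal.ofReal_one, one_mul]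
    _ = ENNReal.ofReal B := by simp
    _ < ⊤ := ENNReal.ofReal_lt_top

lemma aux14_mixDensity_meas (hf : IsDensityKernel ν f) (P : Measure X) [SFinite P] :
    Measurable (mixDensity f P) :=
  (hf.measurable.stronglyMeasurable.integral_prod_right').measurable

lemma aux14_mixDensity_nonneg (hf : IsDensityKernel ν f) (P : Measure X) (y : Y) :
    0 ≤ mixDensity f P y :=
  integral_nonneg fun x => hf.nonneg y x

lemma aux14_mixDensity_integral (hf : IsDensityKernel ν f)
    (P : Measure X) [IsProbabilityMeasure P] :
    ∫ y, mixDensity f P y ∂ν = 1 := by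
  have hint : Integrable (fun p : Y × X => f p.1 p.2) (ν.prod P) := by
    have := aux14_prod_int hf (E := ℝ) (G := fun _ => (1 : ℝ))
      stronglyMeasurable_const (B := 1) (fun y => by simp) P
    simpa [smul_eq_mul] using this
  have hswap := MeasureTheory.integral_integral_swap (f := fun (y : Y) (x : X) => f y x)
    (μ := ν) (ν := P) hint
  calc ∫ y, mixDensity f P y ∂ν = ∫ x, ∫ y, f y x ∂ν ∂P := hswap
    _ = ∫ x, (1 : ℝ) ∂P := by
        refine integral_congr_ae (Filter.Eventually.of_forall fun x => ?_)
        beta_reduce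
        exact hf.integral_one x
    _ = 1 := by simp

lemma aux14_mixDensity_integrable (hf : IsDensityKernel ν f)
    (P : Measure X) [IsProbabilityMeasure P] :
    Integrable (mixDensity f P) ν := by
  have hint : Integrable (fun p : Y × X => f p.1 p.2) (ν.prod P) := by
    have := aux14_prod_int hf (E := ℝ) (G := fun _ => (1 : ℝ))
      stronglyMeasurable_const (B := 1) (fun y => by simp) P
    simpa [smul_eq_mul] using this
  exact hint.integral_prod_left

lemma aux14_mix_prob (hf : IsDensityKernel ν f) (P : Measure X) [IsProbabilityMeasure P] :
    IsProbabilityMeasure (mixMeasure ν f P) := by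
  constructor
  rw [mixMeasure, MeasureTheory.withDensity_apply _ MeasurableSet.univ,
    MeasureTheory.setLIntegral_univ]
  rw [← MeasureTheory.ofReal_integral_eq_lintegral_ofReal
    (aux14_mixDensity_integrable hf P)
    (Filter.Eventually.of_forall (aux14_mixDensity_nonneg hf P)),
    aux14_mixDensity_integral hf P, ENNReal.ofReal_one]

lemma aux14_meanEmb_mix (hf : IsDensityKernel ν f) (F : FeatureMap k H)
    {B : ℝ} (hB : ∀ y, ‖F.toFun y‖ ≤ B)
    (P : Measure X) [IsProbabilityMeasure P] :
    meanEmb F (mixMeasure ν f P) = ∫ x, phiMap ν f F x ∂P := by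
  have hg : Measurable (mixDensity f P) := aux14_mixDensity_meas hf P
  have h0 : meanEmb F (mixMeasure ν f P)
      = ∫ y, ((mixDensity f P y).toNNReal : ℝ) • F.toFun y ∂ν := by
    rw [meanEmb, mixMeasure]
    have : (fun y => ENNReal.ofReal (mixDensity f P y))
        = fun y => ((mixDensity f P y).toNNReal : ℝ≥0∞) := rfl
    rw [this]
    rw [integral_withDensity_eq_integral_smul hg.real_toNNReal F.toFun]
    rfl
  rw [h0]
  have h1 : ∀ y : Y, ((mixDensity f P y).toNNReal : ℝ) • F.toFun y
      = ∫ x, f y x • F.toFun y ∂P := by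
    intro y
    rw [Real.coe_toNNReal _ (aux14_mixDensity_nonneg hf P y), mixDensity,
      ← integral_smul_const]
  rw [integral_congr_ae (Filter.Eventually.of_forall h1)]
  exact MeasureTheory.integral_integral_swap
    (f := fun (y : Y) (x : X) => f y x • F.toFun y)
    (aux14_prod_int hf F.stronglyMeasurable hB P)

lemma aux14_meanEmb_sm {Ω : Type*} [MeasurableSpace Ω]
    {E : Type*} [NormedAddCommGroup E] [NormedSpace ℝ E]
    (ψ : X → E) (hψ : StronglyMeasurable ψ) (P : Ω → Measure X) (hPm : Measurable P)
    (hPp : ∀ ω, IsProbabilityMeasure (P ω)) :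
    StronglyMeasurable (fun ω => ∫ x, ψ x ∂(P ω)) := by
  let κ : ProbabilityTheory.Kernel Ω X := ⟨P, hPm⟩
  haveI : ProbabilityTheory.IsMarkovKernel κ := ⟨fun ω => hPp ω⟩
  exact MeasureTheory.StronglyMeasurable.integral_kernel_prod_right
    (κ := κ) (f := fun _ x => ψ x) (hψ.comp_measurable measurable_snd)

/-- the four-term expansion: covariance integrands agree -/
lemma aux14_cov_integrand {Ω : Type*} [MeasurableSpace Ω] (Pr : Measure Ω)
    {H' : Type*} [NormedAddCommGroup H'] [InnerProductSpace ℝ H'] [CompleteSpace H']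
    {A B : Ω → H} {A' B' : Ω → H'}
    (hA : Integrable A Pr) (hB : Integrable B Pr)
    (hA' : Integrable A' Pr) (hB' : Integrable B' Pr)
    (hAB : ∀ ω ω', ⟪A ω, B ω'⟫ = ⟪A' ω, B' ω'⟫) (ω : Ω) :
    ⟪A ω - ∫ ω', A ω' ∂Pr, B ω - ∫ ω', B ω' ∂Pr⟫
      = ⟪A' ω - ∫ ω', A' ω' ∂Pr, B' ω - ∫ ω', B' ω' ∂Pr⟫ := by
  have h1 : ∀ (v : H) (v' : H'), (∀ ω', ⟪v, B ω'⟫ = ⟪v', B' ω'⟫) →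
      ⟪v, ∫ ω', B ω' ∂Pr⟫ = ⟪v', ∫ ω', B' ω' ∂Pr⟫ := by
    intro v v' h
    rw [← integral_inner hB v, ← integral_inner hB' v']
    exact integral_congr_ae (Filter.Eventually.of_forall h)
  have h2 : ∀ ω', ⟪∫ ω'', A ω'' ∂Pr, B ω'⟫ = ⟪∫ ω'', A' ω'' ∂Pr, B' ω'⟫ := by
    intro ω'
    rw [real_inner_comm, ← integral_inner hA (B ω'),
      real_inner_comm (B' ω') (∫ ω'', A' ω'' ∂Pr), ← integral_inner hA' (B' ω')]
    refine integral_congr_ae (Filter.Eventually.of_forall fun ω'' => ?_)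
    beta_reduce
    rw [real_inner_comm, hAB, real_inner_comm]
  simp only [inner_sub_left, inner_sub_right]
  rw [hAB ω ω, h1 (A ω) (A' ω) (hAB ω), h2 ω, h1 _ _ h2]

end Aux14

noncomputable section

universe uH

theorem stmt_14
    {X : Type*} [TopologicalSpace X] [PolishSpace X] [LocallyCompactSpace X]
    [MeasurableSpace X] [BorelSpace X]
    {Y : Type*} [TopologicalSpace Y] [PolishSpace Y] [LocallyCompactSpace Y]
    [MeasurableSpace Y] [BorelSpace Y]
    (ν : Measure Y) [SigmaFinite ν]
    (f : Y → X → ℝ) (hf : IsDensityKernel ν f)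
    {k : Y → Y → ℝ} (hk : IsKernel k)
    {H : Type*} [NormedAddCommGroup H] [InnerProductSpace ℝ H] [CompleteSpace H]
    (F : FeatureMap k H)
    {Ω : Type*} [MeasurableSpace Ω] (Pr : Measure Ω) [IsProbabilityMeasure Pr]
    (P₁ P₂ : Ω → Measure X)
    (hP₁ : ∀ ω, IsProbabilityMeasure (P₁ ω)) (hP₂ : ∀ ω, IsProbabilityMeasure (P₂ ω))
    (hP₁m : Measurable P₁) (hP₂m : Measurable P₂) :
    -- `k_f` is a kernel on `X × X`
    IsKernel (updatedKernel ν k f) ∧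
    -- `Cov_k(f_{P̃₁}, f_{P̃₂}) = Cov_{k_f}(P̃₁, P̃₂)`
    (∀ (H' : Type uH) [NormedAddCommGroup H'] [InnerProductSpace ℝ H'] [CompleteSpace H']
      (G : FeatureMap (updatedKernel ν k f) H'),
        kerCov F Pr (fun ω => mixMeasure ν f (P₁ ω)) (fun ω => mixMeasure ν f (P₂ ω))
          = kerCov G Pr P₁ P₂) ∧
    -- identifiability and characteristicness transfer
    (Identifiable ν f → IsCharacteristic k → IsCharacteristic (updatedKernel ν k f)) := by
  obtain ⟨B, hB0, hB⟩ := aux14_F_bdd hk F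
  set φ : X → H := phiMap ν f F with hφdef
  have hφsm : StronglyMeasurable φ := aux14_phi_sm hf F
  have hφbd : ∀ x, ‖φ x‖ ≤ B := aux14_phi_norm_le hf F hB
  have hinner : ∀ x₁ x₂, ⟪φ x₁, φ x₂⟫ = updatedKernel ν k f x₁ x₂ :=
    aux14_inner_phi hf F hB
  have hφint : ∀ (P : Measure X) [IsFiniteMeasure P], Integrable φ P := by
    intro P _
    exact aux14_int_of_bdd hφsm.aestronglyMeasurable hφbd
  -- Part 1 : `updatedKernel` is a kernel
  have part1 : IsKernel (updatedKernel ν k f) := by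
    constructor
    · have : Function.uncurry (updatedKernel ν k f)
          = fun p : X × X => ⟪φ p.1, φ p.2⟫ := by
        funext p
        exact (hinner p.1 p.2).symm
      rw [this]
      exact ((hφsm.comp_measurable measurable_fst).inner
        (hφsm.comp_measurable measurable_snd)).measurable
    · refine ⟨B * B, fun x₁ x₂ => ?_⟩
      rw [← hinner]
      exact (abs_real_inner_le_norm _ _).trans
        (mul_le_mul (hφbd x₁) (hφbd x₂) (norm_nonneg _) hB0)
    · intro x₁ x₂
      rw [← hinner, ← hinner, real_inner_comm]
    · intro n x c
      have hsum : ∑ i : Fin n, ∑ j : Fin n, c i * c j * updatedKernel ν k f (x i) (x j)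
          = ⟪∑ i : Fin n, c i • φ (x i), ∑ j : Fin n, c j • φ (x j)⟫ := by
        rw [sum_inner]
        refine Finset.sum_congr rfl fun i _ => ?_
        rw [real_inner_smul_left, inner_sum, Finset.mul_sum]
        refine Finset.sum_congr rfl fun j _ => ?_
        rw [real_inner_smul_right, hinner]
        ring
      rw [hsum]
      exact real_inner_self_nonneg
  refine ⟨part1, ?_, ?_⟩
  · -- Part 2 : covariance identity
    intro H' _ _ _ G
    have hGbd : ∀ x, ‖G.toFun x‖ ≤ B := by
      intro x
      have h1 : ‖G.toFun x‖ ^ 2 = ‖φ x‖ ^ 2 := by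
        rw [← real_inner_self_eq_norm_sq, ← real_inner_self_eq_norm_sq, G.repro, hinner]
      nlinarith [norm_nonneg (G.toFun x), norm_nonneg (φ x), hφbd x]
    have hGint : ∀ (P : Measure X) [IsFiniteMeasure P], Integrable G.toFun P := by
      intro P _
      exact aux14_int_of_bdd G.stronglyMeasurable.aestronglyMeasurable hGbd
    -- the four vector-valued processes
    set A : Ω → H := fun ω => ∫ x, φ x ∂(P₁ ω) with hA
    set Bv : Ω → H := fun ω => ∫ x, φ x ∂(P₂ ω) with hBv
    set A' : Ω → H' := fun ω => meanEmb G (P₁ ω) with hA'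
    set B' : Ω → H' := fun ω => meanEmb G (P₂ ω) with hB'
    have hAsm : StronglyMeasurable A := by rw [hA]; exact aux14_meanEmb_sm φ hφsm P₁ hP₁m hP₁
    have hAint : Integrable A Pr :=
      aux14_int_of_bdd hAsm.aestronglyMeasurable
        (fun ω => by
          haveI := hP₁ ω
          calc ‖A ω‖ ≤ ∫ x, ‖φ x‖ ∂(P₁ ω) := norm_integral_le_integral_norm _
            _ ≤ ∫ _x, B ∂(P₁ ω) := integral_mono (hφint (P₁ ω)).norm
                (integrable_const B) hφbd
            _ = B := by simp)
    have hBvsm : StronglyMeasurable Bv := by rw [hBv]; exact aux14_meanEmb_sm φ hφsm P₂ hP₂m hP₂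
    have hBvint : Integrable Bv Pr :=
      aux14_int_of_bdd hBvsm.aestronglyMeasurable
        (fun ω => by
          haveI := hP₂ ω
          calc ‖Bv ω‖ ≤ ∫ x, ‖φ x‖ ∂(P₂ ω) := norm_integral_le_integral_norm _
            _ ≤ ∫ _x, B ∂(P₂ ω) := integral_mono (hφint (P₂ ω)).norm
                (integrable_const B) hφbd
            _ = B := by simp)
    have hA'sm : StronglyMeasurable A' := by
      rw [hA']; exact aux14_meanEmb_sm G.toFun G.stronglyMeasurable P₁ hP₁m hP₁
    have hA'int : Integrable A' Pr :=
      aux14_int_of_bdd hA'sm.aestronglyMeasurable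
        (fun ω => by
          haveI := hP₁ ω
          calc ‖A' ω‖ ≤ ∫ x, ‖G.toFun x‖ ∂(P₁ ω) := norm_integral_le_integral_norm _
            _ ≤ ∫ _x, B ∂(P₁ ω) := integral_mono (hGint (P₁ ω)).norm
                (integrable_const B) hGbd
            _ = B := by simp)
    have hB'sm : StronglyMeasurable B' := by
      rw [hB']; exact aux14_meanEmb_sm G.toFun G.stronglyMeasurable P₂ hP₂m hP₂
    have hB'int : Integrable B' Pr :=
      aux14_int_of_bdd hB'sm.aestronglyMeasurable
        (fun ω => by
          haveI := hP₂ ω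
          calc ‖B' ω‖ ≤ ∫ x, ‖G.toFun x‖ ∂(P₂ ω) := norm_integral_le_integral_norm _
            _ ≤ ∫ _x, B ∂(P₂ ω) := integral_mono (hGint (P₂ ω)).norm
                (integrable_const B) hGbd
            _ = B := by simp)
    have hAB : ∀ ω ω', ⟪A ω, Bv ω'⟫ = ⟪A' ω, B' ω'⟫ := by
      intro ω ω'
      haveI := hP₁ ω; haveI := hP₂ ω'
      simp only [hA, hBv, hA', hB', meanEmb]
      rw [aux14_inner_emb hinner (hφint (P₁ ω)) (hφint (P₂ ω')),
        aux14_inner_emb G.repro (hGint (P₁ ω)) (hGint (P₂ ω'))]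
    -- now rewrite both covariances
    have hmix₁ : ∀ ω, meanEmb F (mixMeasure ν f (P₁ ω)) = A ω := by
      intro ω; haveI := hP₁ ω
      exact aux14_meanEmb_mix hf F hB (P₁ ω)
    have hmix₂ : ∀ ω, meanEmb F (mixMeasure ν f (P₂ ω)) = Bv ω := by
      intro ω; haveI := hP₂ ω
      exact aux14_meanEmb_mix hf F hB (P₂ ω)
    have hA'e : ∀ ω, meanEmb G (P₁ ω) = A' ω := fun ω => by rw [hA']
    have hB'e : ∀ ω, meanEmb G (P₂ ω) = B' ω := fun ω => by rw [hB']
    simp only [kerCov]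
    refine integral_congr_ae (Filter.Eventually.of_forall fun ω => ?_)
    beta_reduce
    simp only [hmix₁, hmix₂, hA'e, hB'e]
    exact aux14_cov_integrand Pr hAint hBvint hA'int hB'int hAB ω
  · -- Part 3 : identifiability + characteristic ⇒ updated kernel characteristic
    intro hid hchar μ₁ μ₂ h1 h2 heq
    have hFint : ∀ (ξ : Measure Y) [IsFiniteMeasure ξ], Integrable F.toFun ξ := by
      intro ξ _
      exact aux14_int_of_bdd F.stronglyMeasurable.aestronglyMeasurable hB
    set m₁ : H := ∫ x, φ x ∂μ₁ with hm₁
    set m₂ : H := ∫ x, φ x ∂μ₂ with hm₂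
    have hm : ∀ x₂, ⟪m₁, φ x₂⟫ = ⟪m₂, φ x₂⟫ := by
      intro x₂
      have e : ∀ (μ : Measure X) [IsProbabilityMeasure μ],
          ⟪∫ x, φ x ∂μ, φ x₂⟫ = ∫ x, updatedKernel ν k f x x₂ ∂μ := by
        intro μ _
        rw [real_inner_comm, ← integral_inner (hφint μ) (φ x₂)]
        refine integral_congr_ae (Filter.Eventually.of_forall fun x => ?_)
        beta_reduce
        rw [real_inner_comm, hinner]
      rw [e μ₁, e μ₂]
      exact heq x₂
    have hmm : m₁ = m₂ := by
      have hz : ∀ (μ : Measure X) [IsProbabilityMeasure μ],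
          ⟪m₁ - m₂, ∫ x, φ x ∂μ⟫ = 0 := by
        intro μ _
        rw [← integral_inner (hφint μ) (m₁ - m₂)]
        rw [show (0 : ℝ) = ∫ _x, (0 : ℝ) ∂μ by simp]
        refine integral_congr_ae (Filter.Eventually.of_forall fun x => ?_)
        beta_reduce
        rw [inner_sub_left, hm x]
        ring
      have h0 : ⟪m₁ - m₂, m₁ - m₂⟫ = 0 := by
        rw [inner_sub_right, hz μ₁, hz μ₂, sub_zero]
      rw [← sub_eq_zero]
      exact inner_self_eq_zero.mp h0
    haveI hξ₁ : IsProbabilityMeasure (mixMeasure ν f μ₁) := aux14_mix_prob hf μ₁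
    haveI hξ₂ : IsProbabilityMeasure (mixMeasure ν f μ₂) := aux14_mix_prob hf μ₂
    have hmix : meanEmb F (mixMeasure ν f μ₁) = meanEmb F (mixMeasure ν f μ₂) := by
      rw [aux14_meanEmb_mix hf F hB μ₁, aux14_meanEmb_mix hf F hB μ₂]
      exact hmm
    have hxi : mixMeasure ν f μ₁ = mixMeasure ν f μ₂ := by
      refine hchar _ _ hξ₁ hξ₂ fun y' => ?_
      have e : ∀ (ξ : Measure Y) [IsProbabilityMeasure ξ],
          ∫ y, k y y' ∂ξ = ⟪F.toFun y', meanEmb F ξ⟫ := by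
        intro ξ _
        rw [meanEmb, ← integral_inner (hFint ξ) (F.toFun y')]
        refine integral_congr_ae (Filter.Eventually.of_forall fun y => ?_)
        beta_reduce
        rw [F.repro, hk.symm]
      rw [e (mixMeasure ν f μ₁), e (mixMeasure ν f μ₂), hmix]
    have hae : mixDensity f μ₁ =ᵐ[ν] mixDensity f μ₂ := by
      have h3 : (fun y => ENNReal.ofReal (mixDensity f μ₁ y))
          =ᵐ[ν] (fun y => ENNReal.ofReal (mixDensity f μ₂ y)) := by
        rw [← MeasureTheory.withDensity_eq_iff_of_sigmaFinite
          ((aux14_mixDensity_meas hf μ₁).ennreal_ofReal.aemeasurable)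
          ((aux14_mixDensity_meas hf μ₂).ennreal_ofReal.aemeasurable)]
        exact hxi
      filter_upwards [h3] with y hy
      have := (ENNReal.ofReal_eq_ofReal_iff (aux14_mixDensity_nonneg hf μ₁ y)
        (aux14_mixDensity_nonneg hf μ₂ y)).mp hy
      exact this
    exact hid μ₁ μ₂ h1 h2 hae

end
end
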